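/- Let G be a Polish group acting topometrically on a Polish topometric space X with ample generics, and let 𝒪_n ⊆ X^n be the set of generic n-tuples (those whose orbit has comeagre ∂-closure). Then 𝒪_n = { x̄ ∈ X^n : for comeagrely many y ∈ X, (x̄,y) ∈ 𝒪_{n+1} }. -/

import Mathlib

/-- The supremum metric on tuples induced by a metric `D`. -/
noncomputable def supMet {X : Type*} (D : X → X → ℝ) {n : ℕ} (x y : Fin n → X) : ℝ :=
  ⨆ i : Fin n, D (x i) (y i)

/-- The orbit of a tuple under the diagonal action associated to `a : G → X → X`. -/
def orbitTup {G X : Type*} (a : G → X → X) {n : ℕ} (x : Fin n → X) : Set (Fin n → X) :=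
  {y | ∃ g : G, ∀ i, a g (x i) = y i}

/-- The open `ε`-enlargement of a set of tuples with respect to the sup metric of `D`. -/
def encl {X : Type*} (D : X → X → ℝ) {n : ℕ} (ε : ℝ) (A : Set (Fin n → X)) :
    Set (Fin n → X) :=
  {x | ∃ y ∈ A, supMet D x y < ε}

/-- The closure of a set of tuples in the sup metric of `D`. -/
def metCl {X : Type*} (D : X → X → ℝ) {n : ℕ} (A : Set (Fin n → X)) :
    Set (Fin n → X) :=
  {x | ∀ ε > (0 : ℝ), ∃ y ∈ A, supMet D x y < ε}

/-- The set of generic `n`-tuples: those whose orbit has comeagre `D`-closure. -/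
def generics {G X : Type*} [TopologicalSpace X] (D : X → X → ℝ) (a : G → X → X)
    (n : ℕ) : Set (Fin n → X) :=
  {x | metCl D (orbitTup a x) ∈ residual (Fin n → X)}

open Set Filter Topology

section Aux

variable {G X : Type*}

/-! ### sup metric basics -/

lemma aux_D_nonneg (D : X → X → ℝ)
    (hD_eq : ∀ x y : X, D x y = 0 ↔ x = y)
    (hD_symm : ∀ x y : X, D x y = D y x)
    (hD_tri : ∀ x y z : X, D x z ≤ D x y + D y z) (x y : X) : 0 ≤ D x y := by
  have h1 : D x x = 0 := (hD_eq x x).mpr rfl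
  have h2 := hD_tri x y x
  rw [h1, hD_symm y x] at h2
  linarith

lemma aux_le_supMet (D : X → X → ℝ) {n : ℕ} (x y : Fin n → X) (i : Fin n) :
    D (x i) (y i) ≤ supMet D x y :=
  le_ciSup (f := fun j => D (x j) (y j)) (Set.Finite.bddAbove (Set.finite_range _)) i

lemma aux_supMet_le (D : X → X → ℝ) {n : ℕ} {x y : Fin n → X} {c : ℝ}
    (hc : 0 ≤ c) (h : ∀ i, D (x i) (y i) ≤ c) : supMet D x y ≤ c :=
  Real.iSup_le h hc

lemma aux_supMet_nonneg (D : X → X → ℝ) (hDnn : ∀ x y : X, 0 ≤ D x y)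
    {n : ℕ} (x y : Fin n → X) : 0 ≤ supMet D x y :=
  Real.iSup_nonneg fun _ => hDnn _ _

lemma aux_supMet_self (D : X → X → ℝ) (hD_eq : ∀ x y : X, D x y = 0 ↔ x = y)
    {n : ℕ} (x : Fin n → X) : supMet D x x = 0 := by
  refine le_antisymm (aux_supMet_le D le_rfl fun i => le_of_eq ((hD_eq _ _).mpr rfl)) ?_
  exact Real.iSup_nonneg fun i => le_of_eq ((hD_eq _ _).mpr rfl).symm

/-! ### orbits and the action -/

variable [Group G]

lemma aux_mem_orbit_self (a : G → X → X) (ha_one : ∀ x : X, a 1 x = x)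
    {n : ℕ} (x : Fin n → X) : x ∈ orbitTup a x :=
  ⟨1, fun i => ha_one _⟩

lemma aux_orbit_smul (a : G → X → X)
    (ha_mul : ∀ g h : G, ∀ x : X, a (g * h) x = a g (a h x))
    (g : G) {n : ℕ} (x : Fin n → X) :
    orbitTup a (fun i => a g (x i)) = orbitTup a x := by
  ext y
  constructor
  · rintro ⟨h, hh⟩
    exact ⟨h * g, fun i => by rw [ha_mul]; exact hh i⟩
  · rintro ⟨h, hh⟩
    refine ⟨h * g⁻¹, fun i => ?_⟩
    rw [← ha_mul, inv_mul_cancel_right]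
    exact hh i

lemma aux_supMet_smul (D : X → X → ℝ) (a : G → X → X)
    (ha_iso : ∀ g : G, ∀ x y : X, D (a g x) (a g y) = D x y)
    (g : G) {n : ℕ} (x y : Fin n → X) :
    supMet D (fun i => a g (x i)) (fun i => a g (y i)) = supMet D x y :=
  iSup_congr fun i => ha_iso g _ _

/-! ### enclosures and metric closure -/

lemma aux_encl_mono_eps (D : X → X → ℝ) {n : ℕ} {ε ε' : ℝ} (h : ε ≤ ε')
    (A : Set (Fin n → X)) : encl D ε A ⊆ encl D ε' A := by
  rintro x ⟨y, hy, hd⟩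
  exact ⟨y, hy, lt_of_lt_of_le hd h⟩

lemma aux_metCl_subset_encl (D : X → X → ℝ) {n : ℕ} {ε : ℝ} (hε : 0 < ε)
    (A : Set (Fin n → X)) : metCl D A ⊆ encl D ε A := fun x hx => hx ε hε

lemma aux_iInter_encl_subset_metCl (D : X → X → ℝ) {n : ℕ} (A : Set (Fin n → X)) :
    (⋂ k : ℕ, encl D (1 / (k + 1)) A) ⊆ metCl D A := by
  intro x hx ε hε
  obtain ⟨k, hk⟩ := exists_nat_one_div_lt hε
  obtain ⟨y, hy, hd⟩ := Set.mem_iInter.mp hx k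
  exact ⟨y, hy, hd.trans hk⟩

lemma aux_metCl_residual [TopologicalSpace X] (D : X → X → ℝ) {n : ℕ}
    {A : Set (Fin n → X)} (h : ∀ ε > (0 : ℝ), encl D ε A ∈ residual (Fin n → X)) :
    metCl D A ∈ residual (Fin n → X) := by
  have h2 : (⋂ k : ℕ, encl D (1 / (k + 1)) A) ∈ residual (Fin n → X) :=
    countable_iInter_mem.mpr fun k => h _ (by positivity)
  exact mem_of_superset h2 (aux_iInter_encl_subset_metCl D A)

/-- If `w` is `δ`-close to the orbit of `u`, then the `ε`-enclosure of the orbit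
of `u` is contained in the `(ε+δ)`-enclosure of the orbit of `w`. -/
lemma aux_encl_transfer (D : X → X → ℝ)
    (hD_eq : ∀ x y : X, D x y = 0 ↔ x = y)
    (hD_symm : ∀ x y : X, D x y = D y x)
    (hD_tri : ∀ x y z : X, D x z ≤ D x y + D y z)
    (a : G → X → X)
    (ha_mul : ∀ g h : G, ∀ x : X, a (g * h) x = a g (a h x))
    (ha_iso : ∀ g : G, ∀ x y : X, D (a g x) (a g y) = D x y)
    {n : ℕ} {u w : Fin n → X} {δ ε : ℝ}
    (hw : w ∈ encl D δ (orbitTup a u)) :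
    encl D ε (orbitTup a u) ⊆ encl D (ε + δ) (orbitTup a w) := by
  have hDnn := aux_D_nonneg D hD_eq hD_symm hD_tri
  obtain ⟨yu, ⟨g, hg⟩, hwd⟩ := hw
  rintro v ⟨yv, ⟨h, hh⟩, hvd⟩
  refine ⟨fun i => a (h * g⁻¹) (w i), ⟨h * g⁻¹, fun i => rfl⟩, ?_⟩
  have key : ∀ i, D (v i) (a (h * g⁻¹) (w i)) ≤ supMet D v yv + supMet D w yu := by
    intro i
    have e1 : D (yv i) (a (h * g⁻¹) (w i)) = D (w i) (yu i) := by
      have e2 : yv i = a (h * g⁻¹) (yu i) := by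
        rw [← hg i, ← ha_mul, inv_mul_cancel_right, hh i]
      rw [e2, ha_iso, hD_symm]
    calc D (v i) (a (h * g⁻¹) (w i))
        ≤ D (v i) (yv i) + D (yv i) (a (h * g⁻¹) (w i)) := hD_tri _ _ _
      _ = D (v i) (yv i) + D (w i) (yu i) := by rw [e1]
      _ ≤ supMet D v yv + supMet D w yu :=
          add_le_add (aux_le_supMet D v yv i) (aux_le_supMet D w yu i)
  have hle : supMet D v (fun i => a (h * g⁻¹) (w i)) ≤ supMet D v yv + supMet D w yu :=
    aux_supMet_le D (add_nonneg (aux_supMet_nonneg D hDnn _ _) (aux_supMet_nonneg D hDnn _ _)) key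
  exact lt_of_le_of_lt hle (add_lt_add hvd hwd)

/-! ### generics -/

variable [TopologicalSpace X]

lemma aux_generics_smul (D : X → X → ℝ) (a : G → X → X)
    (ha_mul : ∀ g h : G, ∀ x : X, a (g * h) x = a g (a h x))
    (g : G) {m : ℕ} {w : Fin m → X} (hw : w ∈ generics D a m) :
    (fun i => a g (w i)) ∈ generics D a m := by
  simp only [generics, Set.mem_setOf_eq] at hw ⊢
  rwa [aux_orbit_smul a ha_mul g w]

lemma aux_generics_residual (D : X → X → ℝ)
    (hD_eq : ∀ x y : X, D x y = 0 ↔ x = y)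
    (hD_symm : ∀ x y : X, D x y = D y x)
    (hD_tri : ∀ x y z : X, D x z ≤ D x y + D y z)
    (a : G → X → X)
    (ha_mul : ∀ g h : G, ∀ x : X, a (g * h) x = a g (a h x))
    (ha_iso : ∀ g : G, ∀ x y : X, D (a g x) (a g y) = D x y)
    (hAG : ∀ n : ℕ, ∀ ε > (0 : ℝ), ∃ x : Fin n → X,
      encl D ε (orbitTup a x) ∈ residual (Fin n → X))
    (m : ℕ) : generics D a m ∈ residual (Fin m → X) := by
  choose xs hxs using fun k : ℕ => hAG m (1 / (2 * (k + 1))) (by positivity)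
  have hR : (⋂ k : ℕ, encl D (1 / (2 * (k + 1))) (orbitTup a (xs k)))
      ∈ residual (Fin m → X) := countable_iInter_mem.mpr hxs
  refine mem_of_superset hR fun z hz => ?_
  refine aux_metCl_residual D fun ε hε => ?_
  obtain ⟨k, hk⟩ := exists_nat_one_div_lt hε
  have hz' : z ∈ encl D (1 / (2 * (k + 1))) (orbitTup a (xs k)) := Set.mem_iInter.mp hz k
  have hsub := aux_encl_transfer D hD_eq hD_symm hD_tri a ha_mul ha_iso
    (ε := 1 / (2 * (k + 1))) hz'
  have harith : 1 / (2 * ((k : ℝ) + 1)) + 1 / (2 * ((k : ℝ) + 1)) ≤ ε := by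
    have hk1 : ((k : ℝ) + 1) ≠ 0 := by positivity
    have : 1 / (2 * ((k : ℝ) + 1)) + 1 / (2 * ((k : ℝ) + 1)) = 1 / ((k : ℝ) + 1) := by
      field_simp
      norm_num
    rw [this]
    exact le_of_lt hk
  exact mem_of_superset (hxs k) (hsub.trans (aux_encl_mono_eps D harith _))

lemma aux_generics_metClosed (D : X → X → ℝ)
    (hD_eq : ∀ x y : X, D x y = 0 ↔ x = y)
    (hD_symm : ∀ x y : X, D x y = D y x)
    (hD_tri : ∀ x y z : X, D x z ≤ D x y + D y z)
    (a : G → X → X)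
    (ha_one : ∀ x : X, a 1 x = x)
    (ha_mul : ∀ g h : G, ∀ x : X, a (g * h) x = a g (a h x))
    (ha_iso : ∀ g : G, ∀ x y : X, D (a g x) (a g y) = D x y)
    (m : ℕ) : metCl D (generics D a m) ⊆ generics D a m := by
  intro w hw
  refine aux_metCl_residual D fun ε hε => ?_
  obtain ⟨u, hu, hd⟩ := hw (ε / 2) (by linarith)
  have hwenc : w ∈ encl D (ε / 2) (orbitTup a u) :=
    ⟨u, aux_mem_orbit_self a ha_one u, hd⟩
  have hsub := aux_encl_transfer D hD_eq hD_symm hD_tri a ha_mul ha_iso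
    (ε := ε / 2) hwenc
  have hres : encl D (ε / 2) (orbitTup a u) ∈ residual (Fin m → X) :=
    mem_of_superset hu (aux_metCl_subset_encl D (by linarith) _)
  exact mem_of_superset hres (hsub.trans (aux_encl_mono_eps D (by linarith) _))

/-! ### Residual sets and homeomorphisms -/

lemma aux_image_residual {α β : Type*} [TopologicalSpace α] [TopologicalSpace β]
    (h : α ≃ₜ β) {s : Set α} (hs : s ∈ residual α) : h '' s ∈ residual β := by
  rw [← h.residual_map_eq, mem_map, Homeomorph.preimage_image]
  exact hs

lemma aux_preimage_residual {α β : Type*} [TopologicalSpace α] [TopologicalSpace β]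
    (h : α ≃ₜ β) {s : Set β} (hs : s ∈ residual β) : h ⁻¹' s ∈ residual α := by
  rw [← h.residual_map_eq] at hs
  exact hs

/-- Easy direction of the Kuratowski–Ulam theorem: if `A` is comeagre in `α × β`
with `β` second countable, then comeagrely many fibers of `A` are comeagre. -/
lemma aux_KU {α β : Type*} [TopologicalSpace α] [TopologicalSpace β]
    [SecondCountableTopology β]
    {A : Set (α × β)} (hA : A ∈ residual (α × β)) :
    {p : α | {b : β | (p, b) ∈ A} ∈ residual β} ∈ residual α := by
  rw [mem_residual_iff] at hA
  obtain ⟨S, hSo, hSd, hSc, hSA⟩ := hA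
  obtain ⟨B, hBc, -, hB⟩ := TopologicalSpace.exists_countable_basis β
  have key : ∀ U ∈ S, {p : α | {b : β | (p, b) ∈ U} ∈ residual β} ∈ residual α := by
    intro U hU
    have hUo := hSo U hU
    have hUd := hSd U hU
    have h1 : ∀ W ∈ B, W.Nonempty → {p : α | ∃ b ∈ W, (p, b) ∈ U} ∈ residual α := by
      intro W hW hWne
      apply residual_of_dense_open
      · have heq : {p : α | ∃ b ∈ W, (p, b) ∈ U} = Prod.fst '' (U ∩ Set.univ ×ˢ W) := by
          ext p
          constructor
          · rintro ⟨b, hbW, hbU⟩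
            exact ⟨(p, b), ⟨hbU, Set.mem_univ _, hbW⟩, rfl⟩
          · rintro ⟨⟨p', b⟩, ⟨hbU, -, hbW⟩, rfl⟩
            exact ⟨b, hbW, hbU⟩
        rw [heq]
        exact isOpenMap_fst _ (hUo.inter (isOpen_univ.prod (hB.isOpen hW)))
      · rw [dense_iff_inter_open]
        intro O hO hOne
        obtain ⟨⟨p, b⟩, ⟨hpO, hbW⟩, hqU⟩ :=
          hUd.inter_open_nonempty (O ×ˢ W) (hO.prod (hB.isOpen hW)) (hOne.prod hWne)
        exact ⟨p, hpO, b, hbW, hqU⟩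
    have h2 : (⋂ W ∈ {W ∈ B | W.Nonempty}, {p : α | ∃ b ∈ W, (p, b) ∈ U})
        ∈ residual α := by
      refine (countable_bInter_mem (hBc.mono (Set.sep_subset _ _))).mpr ?_
      rintro W ⟨hW, hWne⟩
      exact h1 W hW hWne
    refine mem_of_superset h2 fun p hp => ?_
    have hopen : IsOpen {b : β | (p, b) ∈ U} := hUo.preimage (Continuous.prodMk_right p)
    have hdense : Dense {b : β | (p, b) ∈ U} := by
      rw [hB.dense_iff]
      intro o ho hone
      have := Set.mem_iInter₂.mp hp o ⟨ho, hone⟩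
      obtain ⟨b, hbo, hbU⟩ := this
      exact ⟨b, hbo, hbU⟩
    exact residual_of_dense_open hopen hdense
  have h3 : (⋂ U ∈ S, {p : α | {b : β | (p, b) ∈ U} ∈ residual β}) ∈ residual α :=
    (countable_bInter_mem hSc).mpr key
  refine mem_of_superset h3 fun p hp => ?_
  have h4 : (⋂ U ∈ S, {b : β | (p, b) ∈ U}) ∈ residual β :=
    (countable_bInter_mem hSc).mpr fun U hU => Set.mem_iInter₂.mp hp U hU
  refine mem_of_superset h4 fun b hb => ?_
  refine hSA fun U hU => ?_
  exact Set.mem_iInter₂.mp hb U hU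

end Aux

/-- The homeomorphism splitting off the last coordinate. -/
noncomputable def aux_splitLast (X : Type*) [TopologicalSpace X] (n : ℕ) :
    (Fin (n + 1) → X) ≃ₜ (Fin n → X) × X where
  toFun w := (Fin.init w, w (Fin.last n))
  invFun p := Fin.snoc p.1 p.2
  left_inv w := Fin.snoc_init_self w
  right_inv p := by simp [Fin.init_snoc, Fin.snoc_last]
  continuous_toFun := Continuous.prodMk
    (continuous_pi fun i => continuous_apply _) (continuous_apply _)
  continuous_invFun := by
    refine continuous_pi fun i => ?_
    induction i using Fin.lastCases with
    | last => simpa [Fin.snoc_last] using continuous_snd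
    | cast j => simpa [Fin.snoc_castSucc] using (continuous_apply j).comp' continuous_fst

/-- The homeomorphism of `X` given by the action of `g`. -/
def aux_aHomeo {G X : Type*} [Group G] [TopologicalSpace G] [TopologicalSpace X]
    (a : G → X → X)
    (ha_one : ∀ x : X, a 1 x = x)
    (ha_mul : ∀ g h : G, ∀ x : X, a (g * h) x = a g (a h x))
    (ha_cont : Continuous fun p : G × X => a p.1 p.2) (g : G) : X ≃ₜ X where
  toFun := a g
  invFun := a g⁻¹
  left_inv x := by rw [← ha_mul, inv_mul_cancel, ha_one]
  right_inv x := by rw [← ha_mul, mul_inv_cancel, ha_one]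
  continuous_toFun := ha_cont.comp (continuous_const.prodMk continuous_id)
  continuous_invFun := ha_cont.comp (continuous_const.prodMk continuous_id)

section Approx

/-- Any two generic tuples have orbits passing arbitrarily close to each other. -/
lemma aux_generics_approx {G X : Type*} [Group G] [TopologicalSpace X] [PolishSpace X]
    (D : X → X → ℝ)
    (hD_eq : ∀ x y : X, D x y = 0 ↔ x = y)
    (hD_symm : ∀ x y : X, D x y = D y x)
    (hD_tri : ∀ x y z : X, D x z ≤ D x y + D y z)
    (a : G → X → X)
    (ha_mul : ∀ g h : G, ∀ x : X, a (g * h) x = a g (a h x))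
    (ha_iso : ∀ g : G, ∀ x y : X, D (a g x) (a g y) = D x y)
    {m : ℕ} {x x' : Fin m → X}
    (hx : x ∈ generics D a m) (hx' : x' ∈ generics D a m)
    {ε : ℝ} (hε : 0 < ε) :
    ∃ g : G, supMet D x (fun i => a g (x' i)) < ε := by
  have hDnn := aux_D_nonneg D hD_eq hD_symm hD_tri
  letI := TopologicalSpace.upgradeIsCompletelyMetrizable X
  haveI : Nonempty (Fin m → X) := ⟨x⟩
  have hres : metCl D (orbitTup a x) ∩ metCl D (orbitTup a x') ∈ residual (Fin m → X) :=
    inter_mem hx hx'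
  obtain ⟨w, hw1, hw2⟩ := (dense_of_mem_residual hres).nonempty
  obtain ⟨y1, ⟨g1, hg1⟩, d1⟩ := hw1 (ε / 2) (by linarith)
  obtain ⟨y2, ⟨g2, hg2⟩, d2⟩ := hw2 (ε / 2) (by linarith)
  refine ⟨g1⁻¹ * g2, ?_⟩
  have key : ∀ i, D (x i) (a (g1⁻¹ * g2) (x' i)) ≤ supMet D w y1 + supMet D w y2 := by
    intro i
    have e1 : D (x i) (a (g1⁻¹ * g2) (x' i)) = D (y1 i) (y2 i) := by
      rw [← ha_iso g1, ← ha_mul, mul_inv_cancel_left, hg1 i, hg2 i]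
    rw [e1]
    calc D (y1 i) (y2 i) ≤ D (y1 i) (w i) + D (w i) (y2 i) := hD_tri _ _ _
      _ = D (w i) (y1 i) + D (w i) (y2 i) := by rw [hD_symm]
      _ ≤ supMet D w y1 + supMet D w y2 :=
          add_le_add (aux_le_supMet D w y1 i) (aux_le_supMet D w y2 i)
  have hle : supMet D x (fun i => a (g1⁻¹ * g2) (x' i)) ≤ supMet D w y1 + supMet D w y2 :=
    aux_supMet_le D (add_nonneg (aux_supMet_nonneg D hDnn _ _) (aux_supMet_nonneg D hDnn _ _)) key
  calc supMet D x (fun i => a (g1⁻¹ * g2) (x' i))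
      ≤ supMet D w y1 + supMet D w y2 := hle
    _ < ε / 2 + ε / 2 := add_lt_add d1 d2
    _ = ε := by ring

end Approx

/-- For a topometric action with ample generics, a tuple `x : Xⁿ` is generic
iff for comeagrely many `y ∈ X` the extended tuple `(x,y)` is generic. -/
theorem stmt_6
    {G X : Type*} [Group G] [TopologicalSpace G] [IsTopologicalGroup G] [PolishSpace G]
    [TopologicalSpace X] [PolishSpace X]
    (D : X → X → ℝ)
    (hD_eq : ∀ x y : X, D x y = 0 ↔ x = y)
    (hD_symm : ∀ x y : X, D x y = D y x)
    (hD_tri : ∀ x y z : X, D x z ≤ D x y + D y z)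
    (hD_ref : ∀ U : Set X, IsOpen U → ∀ x ∈ U, ∃ ε > (0 : ℝ), {y | D x y < ε} ⊆ U)
    (hD_lsc : ∀ r : ℝ, IsClosed {p : X × X | D p.1 p.2 ≤ r})
    (a : G → X → X)
    (ha_one : ∀ x : X, a 1 x = x)
    (ha_mul : ∀ g h : G, ∀ x : X, a (g * h) x = a g (a h x))
    (ha_cont : Continuous fun p : G × X => a p.1 p.2)
    (ha_iso : ∀ g : G, ∀ x y : X, D (a g x) (a g y) = D x y)
    (hAG : ∀ n : ℕ, ∀ ε > (0 : ℝ), ∃ x : Fin n → X,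
      encl D ε (orbitTup a x) ∈ residual (Fin n → X))
    (n : ℕ) :
    generics D a n =
      {x : Fin n → X | {y : X | Fin.snoc x y ∈ generics D a (n + 1)} ∈ residual X} := by
  have hDnn := aux_D_nonneg D hD_eq hD_symm hD_tri
  letI := TopologicalSpace.upgradeIsCompletelyMetrizable X
  set E : (Fin (n + 1) → X) ≃ₜ (Fin n → X) × X := aux_splitLast X n with hE
  have hEsymm : ∀ (x' : Fin n → X) (z : X), E.symm (x', z) = Fin.snoc x' z := fun _ _ => rfl
  ext x
  simp only [Set.mem_setOf_eq]
  constructor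
  · -- generic ⇒ comeagrely many generic extensions
    intro hx
    haveI : Nonempty (Fin n → X) := ⟨x⟩
    -- the set of generic (n+1)-tuples, viewed in the product
    have hG1 : generics D a (n + 1) ∈ residual (Fin (n + 1) → X) :=
      aux_generics_residual D hD_eq hD_symm hD_tri a ha_mul ha_iso hAG (n + 1)
    have hA : E.symm ⁻¹' (generics D a (n + 1)) ∈ residual ((Fin n → X) × X) :=
      aux_preimage_residual E.symm hG1
    have hKU := aux_KU hA
    have hpick : ({p : Fin n → X | {b : X | (p, b) ∈ E.symm ⁻¹' (generics D a (n + 1))}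
        ∈ residual X} ∩ generics D a n) ∈ residual (Fin n → X) :=
      inter_mem hKU (aux_generics_residual D hD_eq hD_symm hD_tri a ha_mul ha_iso hAG n)
    obtain ⟨x', hx'fib, hx'gen⟩ := (dense_of_mem_residual hpick).nonempty
    -- the fiber over x' of the generic set, which is comeagre in X
    have hS' : {y : X | Fin.snoc x' y ∈ generics D a (n + 1)} ∈ residual X := by
      have := hx'fib
      simpa only [Set.mem_preimage, hEsymm, Set.mem_setOf_eq] using this
    -- the auxiliary sets T k
    have hT : ∀ k : ℕ, {z : X | Fin.snoc x z ∈
        encl D (1 / (k + 1)) (generics D a (n + 1))} ∈ residual X := by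
      intro k
      obtain ⟨g, hg⟩ := aux_generics_approx D hD_eq hD_symm hD_tri a ha_mul ha_iso
        hx hx'gen (ε := 1 / (k + 1)) (by positivity)
      have himg : (aux_aHomeo a ha_one ha_mul ha_cont g) ''
          {y : X | Fin.snoc x' y ∈ generics D a (n + 1)} ∈ residual X :=
        aux_image_residual _ hS'
      refine mem_of_superset himg ?_
      rintro z ⟨y, hy, rfl⟩
      simp only [Set.mem_setOf_eq] at hy ⊢
      -- the witness: the g-translate of snoc x' y
      have hgen := aux_generics_smul D a ha_mul g (w := Fin.snoc x' y) hy
      refine ⟨_, hgen, ?_⟩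
      have hbound : supMet D (Fin.snoc x (aux_aHomeo a ha_one ha_mul ha_cont g y))
          (fun i => a g (Fin.snoc (α := fun _ => X) x' y i)) ≤ supMet D x (fun i => a g (x' i)) := by
        refine aux_supMet_le D (aux_supMet_nonneg D hDnn _ _) fun i => ?_
        induction i using Fin.lastCases with
        | last =>
          simp only [Fin.snoc_last]
          exact le_trans (le_of_eq ((hD_eq _ _).mpr rfl)) (aux_supMet_nonneg D hDnn _ _)
        | cast j =>
          simp only [Fin.snoc_castSucc]
          exact aux_le_supMet D x (fun i => a g (x' i)) j
      exact lt_of_le_of_lt hbound hg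
    have hTall : (⋂ k : ℕ, {z : X | Fin.snoc x z ∈
        encl D (1 / (k + 1)) (generics D a (n + 1))}) ∈ residual X :=
      countable_iInter_mem.mpr hT
    refine mem_of_superset hTall fun z hz => ?_
    have hmem : Fin.snoc x z ∈ metCl D (generics D a (n + 1)) := by
      apply aux_iInter_encl_subset_metCl
      exact Set.mem_iInter.mpr fun k => Set.mem_iInter.mp hz k
    exact aux_generics_metClosed D hD_eq hD_symm hD_tri a ha_one ha_mul ha_iso (n + 1) hmem
  · -- comeagrely many generic extensions ⇒ generic
    intro hx
    by_cases hX : Nonempty X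
    · -- pick a generic extension
      obtain ⟨y, hy⟩ := (dense_of_mem_residual hx).nonempty
      simp only [Set.mem_setOf_eq] at hy
      have hC : metCl D (orbitTup a (Fin.snoc x y)) ∈ residual (Fin (n + 1) → X) := hy
      have hA : E.symm ⁻¹' (metCl D (orbitTup a (Fin.snoc x y)))
          ∈ residual ((Fin n → X) × X) := aux_preimage_residual E.symm hC
      have hKU := aux_KU hA
      refine mem_of_superset hKU fun x' hx' => ?_
      simp only [Set.mem_setOf_eq] at hx'
      obtain ⟨z, hz⟩ := (dense_of_mem_residual hx').nonempty
      simp only [Set.mem_setOf_eq, Set.mem_preimage, hEsymm] at hz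
      -- hz : Fin.snoc x' z ∈ metCl D (orbitTup a (Fin.snoc x y))
      intro ε hε
      obtain ⟨u, ⟨h, hh⟩, hd⟩ := hz ε hε
      refine ⟨fun i => a h (x i), ⟨h, fun i => rfl⟩, ?_⟩
      have hbound : supMet D x' (fun i => a h (x i)) ≤ supMet D (Fin.snoc x' z) u := by
        refine aux_supMet_le D (aux_supMet_nonneg D hDnn _ _) fun i => ?_
        have e := aux_le_supMet D (Fin.snoc x' z) u (Fin.castSucc i)
        rw [Fin.snoc_castSucc, ← hh (Fin.castSucc i), Fin.snoc_castSucc] at e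
        exact e
      exact lt_of_le_of_lt hbound hd
    · -- X is empty
      cases n with
      | zero =>
        have huniv : metCl D (orbitTup a x) = Set.univ := by
          refine Set.eq_univ_of_forall fun z => ?_
          have hzx : z = x := Subsingleton.elim z x
          subst hzx
          intro ε hε
          refine ⟨z, aux_mem_orbit_self a ha_one z, ?_⟩
          rw [aux_supMet_self D hD_eq]
          exact hε
        simp only [generics, Set.mem_setOf_eq, huniv]
        exact univ_mem
      | succ m => exact absurd ⟨x 0⟩ hX
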